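/- Let K ⊂ Γ be a compact subset and β > 0 be such that ν_μ − 2β𝟙 ∈ Γ_m for every μ ∈ K, and let σ₀ ∈ ℝ satisfy σ₀ > sup_{∂Γ} f. Then there exists a constant ε > 0, depending only on m, f, K, β and σ₀, such that for every μ ∈ K and every λ ∈ Γ satisfying σ₀ ≤ f(λ) ≤ f(μ) and |ν_μ − ν_λ| ≥ β, one has ∑_{i=1}^m f_i(λ)(μ_i − λ_i) ≥ ε(1 + ∑_{i=1}^m f_i(λ)). -/

import Mathlib

open Filter Topology

/-- The `i`-th partial derivative `fᵢ(x) = ∂f/∂λᵢ(x)`. -/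
noncomputable def pd {m : ℕ} (f : (Fin m → ℝ) → ℝ) (x : Fin m → ℝ) (i : Fin m) : ℝ :=
  fderiv ℝ f x (Pi.single i 1)

/-- The Euclidean norm of a vector in `ℝ^m`. -/
noncomputable def eNorm {m : ℕ} (v : Fin m → ℝ) : ℝ :=
  Real.sqrt (∑ i, (v i) ^ 2)

/-- The unit normal `ν_x = Df(x)/|Df(x)|`. -/
noncomputable def nuv {m : ℕ} (f : (Fin m → ℝ) → ℝ) (x : Fin m → ℝ) : Fin m → ℝ :=
  fun i => pd f x i / eNorm (pd f x)

namespace Guan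

variable {m : ℕ}

lemma sum_sq_nonneg (v : Fin m → ℝ) : 0 ≤ ∑ i, v i ^ 2 :=
  Finset.sum_nonneg fun _ _ => sq_nonneg _

lemma eNorm_nonneg (v : Fin m → ℝ) : 0 ≤ eNorm v := Real.sqrt_nonneg _

lemma sq_eNorm (v : Fin m → ℝ) : eNorm v ^ 2 = ∑ i, v i ^ 2 :=
  Real.sq_sqrt (sum_sq_nonneg v)

lemma abs_le_eNorm (v : Fin m → ℝ) (i : Fin m) : |v i| ≤ eNorm v := by
  rw [← Real.sqrt_sq_eq_abs]
  exact Real.sqrt_le_sqrt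
    (Finset.single_le_sum (f := fun j => v j ^ 2) (fun j _ => sq_nonneg _) (Finset.mem_univ i))

lemma abs_sum_mul_le (a b : Fin m → ℝ) : |∑ i, a i * b i| ≤ eNorm a * eNorm b := by
  rw [← Real.sqrt_sq_eq_abs, eNorm, eNorm, ← Real.sqrt_mul (sum_sq_nonneg a)]
  exact Real.sqrt_le_sqrt (Finset.sum_mul_sq_le_sq_mul_sq Finset.univ a b)

lemma sum_mul_le (a b : Fin m → ℝ) : ∑ i, a i * b i ≤ eNorm a * eNorm b :=
  (le_abs_self _).trans (abs_sum_mul_le a b)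

lemma neg_sum_mul_le (a b : Fin m → ℝ) : -(eNorm a * eNorm b) ≤ ∑ i, a i * b i := by
  have h1 := abs_sum_mul_le a b
  have h2 := neg_abs_le (∑ i, a i * b i)
  linarith

lemma eNorm_le_of_abs_le {v : Fin m → ℝ} {c : ℝ} (hc : 0 ≤ c) (h : ∀ i, |v i| ≤ c) :
    eNorm v ≤ Real.sqrt m * c := by
  have h1 : ∑ i, v i ^ 2 ≤ (m : ℝ) * c ^ 2 := by
    calc ∑ i, v i ^ 2 ≤ ∑ _i : Fin m, c ^ 2 :=
          Finset.sum_le_sum fun i _ => sq_le_sq' (abs_le.mp (h i)).1 (abs_le.mp (h i)).2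
      _ = (m : ℝ) * c ^ 2 := by simp [Finset.sum_const, mul_comm]
  calc eNorm v ≤ Real.sqrt ((m : ℝ) * c ^ 2) := Real.sqrt_le_sqrt h1
    _ = Real.sqrt m * c := by
        rw [Real.sqrt_mul (Nat.cast_nonneg m), Real.sqrt_sq hc]

lemma eNorm_sub_le (a b : Fin m → ℝ) : eNorm (fun i => a i - b i) ≤ eNorm a + eNorm b := by
  have h1 : ∑ i, (a i - b i) ^ 2 ≤ (eNorm a + eNorm b) ^ 2 := by
    have e1 : ∑ i, (a i - b i) ^ 2 = ∑ i, a i ^ 2 - 2 * ∑ i, a i * b i + ∑ i, b i ^ 2 := by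
      rw [Finset.sum_congr rfl (fun i _ => by ring :
        ∀ i ∈ Finset.univ, (a i - b i) ^ 2 = (a i ^ 2 + b i ^ 2) - 2 * (a i * b i))]
      rw [Finset.sum_sub_distrib, Finset.sum_add_distrib, ← Finset.mul_sum]
      ring
    have h2 := neg_sum_mul_le a b
    have sa := sq_eNorm a
    have sb := sq_eNorm b
    nlinarith [eNorm_nonneg a, eNorm_nonneg b]
  calc eNorm (fun i => a i - b i) ≤ Real.sqrt ((eNorm a + eNorm b) ^ 2) := Real.sqrt_le_sqrt h1
    _ = eNorm a + eNorm b := Real.sqrt_sq (by have := eNorm_nonneg a; have := eNorm_nonneg b; linarith)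

lemma fderiv_apply_sum (f : (Fin m → ℝ) → ℝ) (y v : Fin m → ℝ) :
    fderiv ℝ f y v = ∑ i, v i * pd f y i := by
  have hv : v = ∑ i, v i • (Pi.single i (1 : ℝ) : Fin m → ℝ) := by
    funext j
    simp [Finset.sum_apply, Pi.single_apply]
  conv_lhs => rw [hv]
  rw [map_sum]
  exact Finset.sum_congr rfl fun i _ => by
    rw [ContinuousLinearMap.map_smul]; simp [pd]


lemma concave_grad {Γ : Set (Fin m → ℝ)} {f : (Fin m → ℝ) → ℝ} (hΓopen : IsOpen Γ)
    (hfsmooth : ContDiffOn ℝ (⊤ : ℕ∞) f Γ) (hf2 : ConcaveOn ℝ Γ f)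
    {a b : Fin m → ℝ} (ha : a ∈ Γ) (hb : b ∈ Γ) :
    f b - f a ≤ ∑ i, pd f a i * (b i - a i) := by
  have hdiff : DifferentiableAt ℝ f a :=
    (hfsmooth.differentiableOn (by simp)).differentiableAt (hΓopen.mem_nhds ha)
  set d : Fin m → ℝ := b - a with hd
  have hc : HasDerivAt (fun t : ℝ => a + t • d) d 0 := by
    simpa using ((hasDerivAt_id (0 : ℝ)).smul_const d).const_add a
  have hf' : HasFDerivAt f (fderiv ℝ f a) ((fun t : ℝ => a + t • d) 0) := by
    simpa using hdiff.hasFDerivAt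
  have hφ : HasDerivAt (fun t : ℝ => f (a + t • d)) (fderiv ℝ f a d) 0 := by
    exact hf'.comp_hasDerivAt 0 hc
  rw [hasDerivAt_iff_tendsto_slope] at hφ
  have hmono : 𝓝[>] (0 : ℝ) ≤ 𝓝[≠] (0 : ℝ) :=
    nhdsWithin_mono 0 fun t ht => ne_of_gt ht
  have hlim := hφ.mono_left hmono
  have hev : ∀ᶠ t in 𝓝[>] (0 : ℝ),
      f b - f a ≤ slope (fun t : ℝ => f (a + t • d)) 0 t := by
    filter_upwards [Ioo_mem_nhdsGT_of_mem (Set.mem_Ico.mpr ⟨le_refl (0:ℝ), zero_lt_one⟩)]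
      with t ht
    have hpt : a + t • d = t • b + (1 - t) • a := by
      rw [hd]; module
    have hconc := hf2.2 hb ha (le_of_lt ht.1) (by linarith [ht.2] : (0:ℝ) ≤ 1 - t)
      (by ring)
    rw [slope_def_field, sub_zero]
    rw [le_div_iff₀ ht.1]
    have h0 : a + (0:ℝ) • d = a := by simp
    rw [h0, hpt]
    simp only [smul_eq_mul] at hconc
    nlinarith [hconc]
  have hineq : f b - f a ≤ fderiv ℝ f a d := ge_of_tendsto hlim hev
  rw [fderiv_apply_sum] at hineq
  calc f b - f a ≤ ∑ i, d i * pd f a i := hineq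
    _ = ∑ i, pd f a i * (b i - a i) :=
      Finset.sum_congr rfl fun i _ => by rw [hd]; simp [mul_comm]

lemma sum_sq_nuv {f : (Fin m → ℝ) → ℝ} {y : Fin m → ℝ}
    (hG : 0 < eNorm (pd f y)) : ∑ i, nuv f y i ^ 2 = 1 := by
  have : ∑ i, nuv f y i ^ 2 = (∑ i, pd f y i ^ 2) / eNorm (pd f y) ^ 2 := by
    rw [Finset.sum_div]
    exact Finset.sum_congr rfl fun i _ => by rw [nuv, div_pow]
  rw [this, ← sq_eNorm, div_self (by positivity)]

lemma eNorm_nuv {f : (Fin m → ℝ) → ℝ} {y : Fin m → ℝ}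
    (hG : 0 < eNorm (pd f y)) : eNorm (nuv f y) = 1 := by
  rw [eNorm, sum_sq_nuv hG, Real.sqrt_one]

end Guan
open Guan

set_option maxHeartbeats 1000000 in
/-- Lemma 2.1 / Guan: given a compact `K ⊂ Γ`, `β > 0` with
`ν_μ - 2β·𝟙 ∈ Γ_m` for all `μ ∈ K`, and `σ₀ > sup_{∂Γ} f`, there is `ε > 0` such that
for all `μ ∈ K`, `λ ∈ Γ` with `σ₀ ≤ f(λ) ≤ f(μ)` and `|ν_μ - ν_λ| ≥ β` one has
`∑ fᵢ(λ)(μᵢ - λᵢ) ≥ ε (1 + ∑ fᵢ(λ))`. -/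
theorem stmt_0 (m : ℕ) (hm : 2 ≤ m)
    (Γ : Set (Fin m → ℝ)) (f : (Fin m → ℝ) → ℝ)
    (hΓopen : IsOpen Γ) (hΓconv : Convex ℝ Γ) (hΓne : Γ.Nonempty)
    (hΓproper : Γ ≠ Set.univ)
    (hΓcone : ∀ t : ℝ, 0 < t → ∀ x ∈ Γ, t • x ∈ Γ)
    (hΓperm : ∀ π : Equiv.Perm (Fin m), ∀ x ∈ Γ, x ∘ π ∈ Γ)
    (hΓpos : {x : Fin m → ℝ | ∀ i, 0 < x i} ⊆ Γ)
    (hfsmooth : ContDiffOn ℝ (⊤ : ℕ∞) f Γ)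
    (hfsymm : ∀ π : Equiv.Perm (Fin m), ∀ x ∈ Γ, f (x ∘ π) = f x)
    (hf1 : ∀ x ∈ Γ, ∀ i, 0 < pd f x i)
    (hf2 : ConcaveOn ℝ Γ f)
    (K : Set (Fin m → ℝ)) (hK : IsCompact K) (hKΓ : K ⊆ Γ)
    (β : ℝ) (hβ : 0 < β)
    (hνK : ∀ μ ∈ K, ∀ i, 2 * β < nuv f μ i)
    (σ₀ : ℝ)
    (hσ₀ : ∃ σ' < σ₀, ∀ x₀ ∈ frontier Γ, ∀ u : ℕ → Fin m → ℝ,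
        (∀ k, u k ∈ Γ) → Tendsto u atTop (𝓝 x₀) →
        Filter.limsup (fun k => f (u k)) atTop ≤ σ') :
    ∃ ε : ℝ, 0 < ε ∧ ∀ μ ∈ K, ∀ lam ∈ Γ, σ₀ ≤ f lam → f lam ≤ f μ →
      β ≤ eNorm (fun i => nuv f μ i - nuv f lam i) →
      ∑ i, pd f lam i * (μ i - lam i) ≥ ε * (1 + ∑ i, pd f lam i) := by
  classical
  rcases Set.eq_empty_or_nonempty K with hKe | hKne
  · exact ⟨1, one_pos, by simp [hKe]⟩
  have hmR : (2 : ℝ) ≤ (m : ℝ) := by exact_mod_cast hm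
  have hsqm : (0 : ℝ) < Real.sqrt m := Real.sqrt_pos.mpr (by linarith)
  have hsqm_le : Real.sqrt m ≤ (m : ℝ) := by
    have h := Real.sqrt_le_sqrt (show (m : ℝ) ≤ (m : ℝ) ^ 2 by nlinarith)
    rwa [Real.sqrt_sq (by linarith : (0:ℝ) ≤ (m:ℝ))] at h
  obtain ⟨ρ, hρpos, hρ⟩ := hK.exists_cthickening_subset_open hΓopen hKΓ
  obtain ⟨C, hCdef⟩ : ∃ C, C = Metric.cthickening ρ K := ⟨_, rfl⟩
  have hCcomp : IsCompact C := hCdef ▸ hK.cthickening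
  have hCΓ : C ⊆ Γ := hCdef ▸ hρ
  have hKC : K ⊆ C := hCdef ▸ Metric.self_subset_cthickening K
  have hCne : C.Nonempty := hKne.mono hKC
  -- positivity of the gradient norm on Γ
  have hGpos : ∀ y ∈ Γ, 0 < eNorm (pd f y) := by
    intro y hy
    have i0 : Fin m := ⟨0, by omega⟩
    have h1 := hf1 y hy i0
    have h2 := Guan.abs_le_eNorm (pd f y) i0
    have h3 := le_abs_self (pd f y i0)
    linarith
  -- continuity of the gradient
  have hfdcont : ContinuousOn (fderiv ℝ f) Γ :=
    hfsmooth.continuousOn_fderiv_of_isOpen hΓopen (by exact_mod_cast le_top)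
  have hpdcont : ContinuousOn (fun y => pd f y) Γ := by
    apply continuousOn_pi.2
    intro i
    exact hfdcont.clm_apply continuousOn_const
  have heNc : Continuous (fun v : Fin m → ℝ => eNorm v) := by
    unfold eNorm
    exact Real.continuous_sqrt.comp (by continuity)
  -- minimum of the gradient norm on C
  obtain ⟨y₀, hy₀C, hy₀min⟩ :=
    hCcomp.exists_isMinOn hCne (heNc.comp_continuousOn (hpdcont.mono hCΓ))
  obtain ⟨g₀, hg₀def⟩ : ∃ g₀, g₀ = eNorm (pd f y₀) := ⟨_, rfl⟩
  have hg₀pos : 0 < g₀ := hg₀def ▸ hGpos y₀ (hCΓ hy₀C)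
  -- uniform continuity of the gradient on C
  have hUC := hCcomp.uniformContinuousOn_of_continuous (hpdcont.mono hCΓ)
  rw [Metric.uniformContinuousOn_iff_le] at hUC
  have hε₁pos : 0 < g₀ * β ^ 2 / 8 := by positivity
  obtain ⟨s₀, hs₀pos, hs₀⟩ := hUC (g₀ * β ^ 2 / 8 / m) (by positivity)
  -- choice of s
  obtain ⟨s, hsdef⟩ : ∃ s, s = min (min (ρ / 2) (s₀ / 2)) 1 := ⟨_, rfl⟩
  have hspos : 0 < s := by
    rw [hsdef]; exact lt_min (lt_min (by linarith) (by linarith)) one_pos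
  have hsρ : 2 * s ≤ ρ := by
    have h1 : s ≤ ρ / 2 := hsdef ▸ le_trans (min_le_left _ _) (min_le_left _ _)
    linarith
  have hss₀ : 2 * s ≤ s₀ := by
    have h1 : s ≤ s₀ / 2 := hsdef ▸ le_trans (min_le_left _ _) (min_le_right _ _)
    linarith
  obtain ⟨δ, hδdef⟩ : ∃ d, d = s * (g₀ * β ^ 2 / 4) := ⟨_, rfl⟩
  obtain ⟨κ, hκdef⟩ : ∃ k, k = s * β ^ 2 / (2 * Real.sqrt m) := ⟨_, rfl⟩
  have hδpos : 0 < δ := by rw [hδdef]; positivity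
  have hκpos : 0 < κ := by rw [hκdef]; positivity
  refine ⟨min δ κ, lt_min hδpos hκpos, ?_⟩
  intro μ hμ lam hlam hσlam hflam hβn
  obtain ⟨w, hwdef⟩ : ∃ w : Fin m → ℝ, w = fun i => nuv f μ i - nuv f lam i := ⟨_, rfl⟩
  rw [← hwdef] at hβn
  have hΓμ : μ ∈ Γ := hKΓ hμ
  have hGμ : 0 < eNorm (pd f μ) := hGpos μ hΓμ
  have hGlam : 0 < eNorm (pd f lam) := hGpos lam hlam
  have hunitμ : ∑ i, nuv f μ i ^ 2 = 1 := Guan.sum_sq_nuv hGμ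
  have hunitlam : ∑ i, nuv f lam i ^ 2 = 1 := Guan.sum_sq_nuv hGlam
  have hw2 : eNorm w ≤ 2 := by
    have h := Guan.eNorm_sub_le (nuv f μ) (nuv f lam)
    rw [Guan.eNorm_nuv hGμ, Guan.eNorm_nuv hGlam, ← hwdef] at h
    calc eNorm w ≤ 1 + 1 := h
      _ = 2 := by norm_num
  have hwabs : ∀ i, |w i| ≤ 2 := fun i => (Guan.abs_le_eNorm w i).trans hw2
  have hβsq : β ^ 2 ≤ eNorm w ^ 2 := pow_le_pow_left₀ hβ.le hβn 2
  -- inner product identities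
  have hsumμw : ∑ i, nuv f μ i * w i = eNorm w ^ 2 / 2 := by
    have e1 : ∀ i ∈ Finset.univ, (w i) ^ 2
        = nuv f μ i ^ 2 + nuv f lam i ^ 2 - 2 * (nuv f μ i * nuv f lam i) := by
      intro i _; simp only [hwdef]; ring
    have e2 : ∀ i ∈ Finset.univ, nuv f μ i * w i
        = nuv f μ i ^ 2 - nuv f μ i * nuv f lam i := by
      intro i _; simp only [hwdef]; ring
    have h1 : eNorm w ^ 2 = 2 - 2 * ∑ i, nuv f μ i * nuv f lam i := by
      rw [Guan.sq_eNorm, Finset.sum_congr rfl e1, Finset.sum_sub_distrib,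
        Finset.sum_add_distrib, ← Finset.mul_sum, hunitμ, hunitlam]
      ring
    rw [Finset.sum_congr rfl e2, Finset.sum_sub_distrib, hunitμ, h1]
    ring
  have hsumlamw : ∑ i, nuv f lam i * w i = -(eNorm w ^ 2) / 2 := by
    have e1 : ∀ i ∈ Finset.univ, (w i) ^ 2
        = nuv f μ i ^ 2 + nuv f lam i ^ 2 - 2 * (nuv f μ i * nuv f lam i) := by
      intro i _; simp only [hwdef]; ring
    have e2 : ∀ i ∈ Finset.univ, nuv f lam i * w i
        = nuv f μ i * nuv f lam i - nuv f lam i ^ 2 := by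
      intro i _; simp only [hwdef]; ring
    have h1 : eNorm w ^ 2 = 2 - 2 * ∑ i, nuv f μ i * nuv f lam i := by
      rw [Guan.sq_eNorm, Finset.sum_congr rfl e1, Finset.sum_sub_distrib,
        Finset.sum_add_distrib, ← Finset.mul_sum, hunitμ, hunitlam]
      ring
    rw [Finset.sum_congr rfl e2, Finset.sum_sub_distrib, hunitlam, h1]
    ring
  -- gradient written through the normal
  have hpdμ : ∀ i, pd f μ i = eNorm (pd f μ) * nuv f μ i := by
    intro i; rw [nuv]; field_simp
  have hpdlam : ∀ i, pd f lam i = eNorm (pd f lam) * nuv f lam i := by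
    intro i; rw [nuv]; field_simp
  -- the curve stays in C
  have hyC : ∀ τ : ℝ, 0 ≤ τ → τ ≤ s → (μ + τ • w) ∈ C := by
    intro τ h0 h1
    rw [hCdef]
    apply Metric.mem_cthickening_of_dist_le _ μ ρ K hμ
    rw [dist_pi_le_iff hρpos.le]
    intro i
    rw [Real.dist_eq]
    simp only [Pi.add_apply, Pi.smul_apply, smul_eq_mul]
    have e : |μ i + τ * w i - μ i| = τ * |w i| := by
      rw [show μ i + τ * w i - μ i = τ * w i by ring, abs_mul, abs_of_nonneg h0]
    rw [e]
    calc τ * |w i| ≤ s * 2 :=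
          mul_le_mul h1 (hwabs i) (abs_nonneg _) hspos.le
      _ ≤ ρ := by linarith
  have hyΓ : ∀ τ : ℝ, 0 ≤ τ → τ ≤ s → (μ + τ • w) ∈ Γ :=
    fun τ h0 h1 => hCΓ (hyC τ h0 h1)
  obtain ⟨x, hxdef⟩ : ∃ x : Fin m → ℝ, x = μ + s • w := ⟨_, rfl⟩
  have hxΓ : x ∈ Γ := hxdef ▸ hyΓ s hspos.le le_rfl
  -- derivative along the curve
  have hasD : ∀ τ ∈ Set.Icc (0 : ℝ) s, HasDerivAt (fun t : ℝ => f (μ + t • w))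
      (∑ i, w i * pd f (μ + τ • w) i) τ := by
    intro τ hτ
    have hyΓ' := hyΓ τ hτ.1 hτ.2
    have hdiff : DifferentiableAt ℝ f (μ + τ • w) :=
      (hfsmooth.differentiableOn (by simp)).differentiableAt
        (hΓopen.mem_nhds hyΓ')
    have hc : HasDerivAt (fun t : ℝ => μ + t • w) w τ := by
      simpa using ((hasDerivAt_id τ).smul_const w).const_add μ
    have hf' : HasFDerivAt f (fderiv ℝ f (μ + τ • w)) ((fun t : ℝ => μ + t • w) τ) :=
      hdiff.hasFDerivAt
    have h := hf'.comp_hasDerivAt τ hc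
    rw [Guan.fderiv_apply_sum] at h
    exact h
  obtain ⟨ξ, hξ, hslope⟩ := exists_hasDerivAt_eq_slope (fun t : ℝ => f (μ + t • w))
    (fun τ => ∑ i, w i * pd f (μ + τ • w) i) hspos
    (fun τ hτ => (hasD τ hτ).continuousAt.continuousWithinAt)
    (fun τ hτ => hasD τ ⟨hτ.1.le, hτ.2.le⟩)
  -- the gradient at the intermediate point is close to the gradient at μ
  have hξC : (μ + ξ • w) ∈ C := hyC ξ hξ.1.le hξ.2.le
  have hdistξ : dist (μ + ξ • w) μ ≤ s₀ := by
    rw [dist_pi_le_iff hs₀pos.le]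
    intro i
    rw [Real.dist_eq]
    simp only [Pi.add_apply, Pi.smul_apply, smul_eq_mul]
    have e : |μ i + ξ * w i - μ i| = ξ * |w i| := by
      rw [show μ i + ξ * w i - μ i = ξ * w i by ring, abs_mul, abs_of_nonneg hξ.1.le]
    rw [e]
    calc ξ * |w i| ≤ s * 2 :=
          mul_le_mul hξ.2.le (hwabs i) (abs_nonneg _) hspos.le
      _ ≤ s₀ := by linarith
  have hpdclose := hs₀ _ hξC μ (hKC hμ) hdistξ
  have hcomp : ∀ i, |pd f (μ + ξ • w) i - pd f μ i| ≤ g₀ * β ^ 2 / 8 / m := by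
    intro i
    have h := dist_le_pi_dist (pd f (μ + ξ • w)) (pd f μ) i
    rw [Real.dist_eq] at h
    linarith [hpdclose, h]
  have hediff : eNorm (fun i => pd f (μ + ξ • w) i - pd f μ i) ≤ g₀ * β ^ 2 / 8 := by
    have h := Guan.eNorm_le_of_abs_le (by positivity) hcomp
    calc eNorm (fun i => pd f (μ + ξ • w) i - pd f μ i)
        ≤ Real.sqrt m * (g₀ * β ^ 2 / 8 / m) := h
      _ ≤ (m : ℝ) * (g₀ * β ^ 2 / 8 / m) :=
          mul_le_mul_of_nonneg_right hsqm_le (by positivity)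
      _ = g₀ * β ^ 2 / 8 := by field_simp
  -- lower bound on the derivative at ξ
  have hGμ_ge : g₀ ≤ eNorm (pd f μ) := by
    have h := isMinOn_iff.mp hy₀min μ (hKC hμ)
    simpa [← hg₀def] using h
  have hder : g₀ * β ^ 2 / 4 ≤ ∑ i, w i * pd f (μ + ξ • w) i := by
    have hsplit : ∑ i, w i * pd f (μ + ξ • w) i
        = ∑ i, w i * pd f μ i + ∑ i, w i * (pd f (μ + ξ • w) i - pd f μ i) := by
      rw [← Finset.sum_add_distrib]
      exact Finset.sum_congr rfl fun i _ => by ring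
    have t1 : ∑ i, w i * pd f μ i = eNorm (pd f μ) * (eNorm w ^ 2 / 2) := by
      have e : ∀ i ∈ Finset.univ, w i * pd f μ i
          = eNorm (pd f μ) * (nuv f μ i * w i) := by
        intro i _; rw [hpdμ i]; ring
      rw [Finset.sum_congr rfl e, ← Finset.mul_sum, hsumμw]
    have t1' : g₀ * (β ^ 2 / 2) ≤ ∑ i, w i * pd f μ i := by
      rw [t1]
      have : g₀ * (β ^ 2 / 2) ≤ eNorm (pd f μ) * (β ^ 2 / 2) :=
        mul_le_mul_of_nonneg_right hGμ_ge (by positivity)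
      have h2 : eNorm (pd f μ) * (β ^ 2 / 2) ≤ eNorm (pd f μ) * (eNorm w ^ 2 / 2) :=
        mul_le_mul_of_nonneg_left (by linarith) hGμ.le
      linarith
    have t2 : -(g₀ * β ^ 2 / 8 * 2) ≤ ∑ i, w i * (pd f (μ + ξ • w) i - pd f μ i) := by
      have h := Guan.neg_sum_mul_le w (fun i => pd f (μ + ξ • w) i - pd f μ i)
      have hb : eNorm w * eNorm (fun i => pd f (μ + ξ • w) i - pd f μ i)
          ≤ 2 * (g₀ * β ^ 2 / 8) :=
        mul_le_mul hw2 hediff (Guan.eNorm_nonneg _) (by norm_num)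
      linarith
    rw [hsplit]
    linarith
  -- lower bound on f x - f μ
  have hne : x = μ + s • w := hxdef
  have hfx : δ ≤ f x - f μ := by
    have e0 : (fun t : ℝ => f (μ + t • w)) 0 = f μ := by simp
    have es : (fun t : ℝ => f (μ + t • w)) s = f x := by rw [hne]
    have hs' : f x - f μ = s * (∑ i, w i * pd f (μ + ξ • w) i) := by
      have h0 : μ + (0 : ℝ) • w = μ := by simp
      have hthis := hslope
      rw [h0, sub_zero] at hthis
      have h2 : s * (∑ i, w i * pd f (μ + ξ • w) i) = f (μ + s • w) - f μ := by
        rw [hthis]; field_simp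
      rw [hne]; linarith [h2]
    rw [hs', hδdef]
    exact mul_le_mul_of_nonneg_left hder hspos.le
  -- concavity at lam
  have hgrad := Guan.concave_grad hΓopen hfsmooth hf2 hlam hxΓ
  have hsplit2 : ∑ i, pd f lam i * (x i - lam i)
      = ∑ i, pd f lam i * (μ i - lam i) + s * ∑ i, pd f lam i * w i := by
    rw [Finset.mul_sum, ← Finset.sum_add_distrib]
    refine Finset.sum_congr rfl fun i _ => ?_
    rw [hne]
    simp only [Pi.add_apply, Pi.smul_apply, smul_eq_mul]
    ring
  have hlamw : ∑ i, pd f lam i * w i = eNorm (pd f lam) * (-(eNorm w ^ 2) / 2) := by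
    have e : ∀ i ∈ Finset.univ, pd f lam i * w i
        = eNorm (pd f lam) * (nuv f lam i * w i) := by
      intro i _; rw [hpdlam i]; ring
    rw [Finset.sum_congr rfl e, ← Finset.mul_sum, hsumlamw]
  -- sum of the gradient entries
  have hS : 0 ≤ ∑ i, pd f lam i :=
    Finset.sum_nonneg fun i _ => (hf1 lam hlam i).le
  have hSle : ∑ i, pd f lam i ≤ Real.sqrt m * eNorm (pd f lam) := by
    have h := Guan.sum_mul_le (fun _ : Fin m => (1 : ℝ)) (pd f lam)
    have hone : eNorm (fun _ : Fin m => (1 : ℝ)) = Real.sqrt m := by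
      rw [eNorm]; simp
    rw [hone] at h
    calc ∑ i, pd f lam i = ∑ i, (1 : ℝ) * pd f lam i := by simp
      _ ≤ Real.sqrt m * eNorm (pd f lam) := h
  -- final assembly
  have key1 : ∑ i, pd f lam i * (μ i - lam i)
      ≥ (f x - f lam) + s * (eNorm (pd f lam) * (eNorm w ^ 2 / 2)) := by
    have h := hgrad
    rw [hsplit2, hlamw] at h
    have : s * (eNorm (pd f lam) * (-(eNorm w ^ 2) / 2))
        = -(s * (eNorm (pd f lam) * (eNorm w ^ 2 / 2))) := by ring
    rw [this] at h
    linarith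
  have key2 : δ ≤ f x - f lam := by linarith
  have key3 : κ * (∑ i, pd f lam i) ≤ s * (eNorm (pd f lam) * (eNorm w ^ 2 / 2)) := by
    have h1 : κ * (∑ i, pd f lam i) ≤ κ * (Real.sqrt m * eNorm (pd f lam)) :=
      mul_le_mul_of_nonneg_left hSle hκpos.le
    have h2 : κ * (Real.sqrt m * eNorm (pd f lam))
        = s * (eNorm (pd f lam) * (β ^ 2 / 2)) := by
      rw [hκdef]
      rw [div_mul_eq_mul_div, div_eq_iff (by positivity : (2 * Real.sqrt m) ≠ 0)]
      ring
    have h3 : s * (eNorm (pd f lam) * (β ^ 2 / 2))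
        ≤ s * (eNorm (pd f lam) * (eNorm w ^ 2 / 2)) := by
      apply mul_le_mul_of_nonneg_left _ hspos.le
      apply mul_le_mul_of_nonneg_left _ hGlam.le
      linarith
    linarith
  have hfinal : min δ κ * (1 + ∑ i, pd f lam i) ≤ δ + κ * (∑ i, pd f lam i) := by
    have h1 : min δ κ ≤ δ := min_le_left _ _
    have h2 : min δ κ * (∑ i, pd f lam i) ≤ κ * (∑ i, pd f lam i) :=
      mul_le_mul_of_nonneg_right (min_le_right _ _) hS
    have h3 : min δ κ * (1 + ∑ i, pd f lam i)
        = min δ κ + min δ κ * (∑ i, pd f lam i) := by ring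
    linarith
  linarith [key1, key2, key3, hfinal]
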